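/- Let v ∈ ℂ² ⊗ ℂ² be a two-qubit unit vector with density matrix ψ = v vᴴ, let e₀ ∈ ℂ² be the first standard basis vector (the ancilla state |0⟩), and let C be a Clifford unitary on the three-qubit space (ℂ² ⊗ ℂ²) ⊗ ℂ². Suppose C (v ⊗ e₀) = w ⊗ u for unit vectors w ∈ ℂ² ⊗ ℂ² and u ∈ ℂ², and suppose M₂(u uᴴ) > M₂ᴸ(ψ). Then there exist no 2×2 unitaries U_A, U_B with w wᴴ = (U_A ⊗ U_B) ψ (U_A ⊗ U_B)ᴴ; in fact M₂(w wᴴ) < M₂ᴺᴸ(ψ). -/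

import Mathlib

noncomputable section
open Matrix Kronecker

/-- The four single-qubit Pauli matrices I, X, Y, Z. -/
def pauli : Fin 4 → Matrix (Fin 2) (Fin 2) ℂ :=
  ![1, !![0, 1; 1, 0], !![0, -Complex.I; Complex.I, 0], !![1, 0; 0, -1]]

/-- Two-qubit Pauli strings σ₁ ⊗ σ₂. -/
def pauli2 (a : Fin 4 × Fin 4) : Matrix (Fin 2 × Fin 2) (Fin 2 × Fin 2) ℂ :=
  pauli a.1 ⊗ₖ pauli a.2

/-- Three-qubit Pauli strings (σ₁ ⊗ σ₂) ⊗ σ₃. -/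
def pauli3 (a : Fin 4 × Fin 4 × Fin 4) :
    Matrix ((Fin 2 × Fin 2) × Fin 2) ((Fin 2 × Fin 2) × Fin 2) ℂ :=
  (pauli a.1 ⊗ₖ pauli a.2.1) ⊗ₖ pauli a.2.2

/-- Rank-one density matrix v vᴴ. -/
def dm {ι : Type*} (v : ι → ℂ) : Matrix ι ι ℂ := Matrix.vecMulVec v (star v)

/-- Stabilizer 2-Rényi entropy of a single-qubit state. -/
def M2one (ψ : Matrix (Fin 2) (Fin 2) ℂ) : ℝ :=
  - Real.logb 2 ((1 / 2) * ∑ a : Fin 4, ‖(pauli a * ψ).trace‖ ^ 4)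

/-- Stabilizer 2-Rényi entropy of a two-qubit state. -/
def M2two (ψ : Matrix (Fin 2 × Fin 2) (Fin 2 × Fin 2) ℂ) : ℝ :=
  - Real.logb 2 ((1 / 4) * ∑ a : Fin 4 × Fin 4, ‖(pauli2 a * ψ).trace‖ ^ 4)

/-- Non-local magic: infimum of stabilizer entropy over local unitary orbits. -/
def M2NL (ψ : Matrix (Fin 2 × Fin 2) (Fin 2 × Fin 2) ℂ) : ℝ :=
  ⨅ U : Matrix.unitaryGroup (Fin 2) ℂ × Matrix.unitaryGroup (Fin 2) ℂ,
    M2two (((U.1 : Matrix (Fin 2) (Fin 2) ℂ) ⊗ₖ (U.2 : Matrix (Fin 2) (Fin 2) ℂ)) * ψ *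
      ((U.1 : Matrix (Fin 2) (Fin 2) ℂ) ⊗ₖ (U.2 : Matrix (Fin 2) (Fin 2) ℂ))ᴴ)

/-- Local magic: total magic minus non-local magic. -/
def M2L (ψ : Matrix (Fin 2 × Fin 2) (Fin 2 × Fin 2) ℂ) : ℝ := M2two ψ - M2NL ψ

/-- A unitary on three qubits is Clifford if it maps every Pauli string
to a Pauli string up to a sign. -/
def IsClifford3 (C : Matrix ((Fin 2 × Fin 2) × Fin 2) ((Fin 2 × Fin 2) × Fin 2) ℂ) : Prop :=
  C ∈ Matrix.unitaryGroup ((Fin 2 × Fin 2) × Fin 2) ℂ ∧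
    ∀ a : Fin 4 × Fin 4 × Fin 4, ∃ (b : Fin 4 × Fin 4 × Fin 4) (s : ℝ),
      (s = 1 ∨ s = -1) ∧ C * pauli3 a * Cᴴ = (s : ℂ) • pauli3 b

/-- Tensor (Kronecker) product of vectors. -/
def tens {α β : Type*} (v : α → ℂ) (w : β → ℂ) : α × β → ℂ := fun p => v p.1 * w p.2

/-- The ancilla state |0⟩, first standard basis vector of ℂ². -/
def e0 : Fin 2 → ℂ := fun i => if i = 0 then 1 else 0


lemma dm_mulVec {ι : Type*} [Fintype ι] (M : Matrix ι ι ℂ) (x : ι → ℂ) :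
    dm (M.mulVec x) = M * dm x * Mᴴ := by
  unfold dm
  rw [vecMulVec_eq (Fin 1), vecMulVec_eq (Fin 1), star_mulVec, replicateCol_mulVec, replicateRow_vecMul]
  simp [Matrix.mul_assoc]

lemma dm_tens {α β : Type*} (x : α → ℂ) (y : β → ℂ) :
    dm (tens x y) = dm x ⊗ₖ dm y := by
  ext ⟨i, k⟩ ⟨j, l⟩
  simp [dm, tens, vecMulVec, kroneckerMap_apply]
  ring

lemma trace_dm {ι : Type*} [Fintype ι] (x : ι → ℂ) :
    (dm x).trace = ((∑ i, Complex.normSq (x i) : ℝ) : ℂ) := by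
  simp [dm, trace, vecMulVec, Matrix.diag, Complex.mul_conj]

lemma pauli_mul_trace (i j : Fin 4) :
    (pauli i * pauli j).trace = if i = j then 2 else 0 := by
  fin_cases i <;> fin_cases j <;>
    simp [pauli, Matrix.trace_fin_two, Matrix.mul_apply, Fin.sum_univ_two, Matrix.one_apply] <;> norm_num

lemma pauli_entry_abs (a : Fin 4) (i j : Fin 2) : ‖pauli a i j‖ ≤ 1 := by
  fin_cases a <;> fin_cases i <;> fin_cases j <;>
    simp [pauli, Matrix.one_apply]

lemma pauli_zero : pauli 0 = 1 := rfl

lemma pauli3_mul_trace (a b : Fin 4 × Fin 4 × Fin 4) :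
    (pauli3 a * pauli3 b).trace = if a = b then 8 else 0 := by
  unfold pauli3
  rw [← Matrix.mul_kronecker_mul, ← Matrix.mul_kronecker_mul, Matrix.trace_kronecker,
    Matrix.trace_kronecker, pauli_mul_trace, pauli_mul_trace, pauli_mul_trace]
  obtain ⟨a1, a2, a3⟩ := a
  obtain ⟨b1, b2, b3⟩ := b
  by_cases h1 : a1 = b1 <;> by_cases h2 : a2 = b2 <;> by_cases h3 : a3 = b3 <;>
    simp_all [Prod.ext_iff] <;> norm_num

lemma pauli3_inj {a b : Fin 4 × Fin 4 × Fin 4} {s : ℝ} (hs : s = 1 ∨ s = -1)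
    (h : pauli3 a = (s : ℂ) • pauli3 b) : a = b := by
  by_contra hne
  have h1 : (pauli3 a * pauli3 a).trace = 8 := by simp [pauli3_mul_trace]
  nth_rewrite 1 [h] at h1
  rw [Matrix.smul_mul, Matrix.trace_smul, pauli3_mul_trace] at h1
  rcases hs with rfl | rfl <;> simp [Ne.symm hne] at h1

lemma clifford_sum (C : Matrix ((Fin 2 × Fin 2) × Fin 2) ((Fin 2 × Fin 2) × Fin 2) ℂ)
    (hCu : C ∈ Matrix.unitaryGroup ((Fin 2 × Fin 2) × Fin 2) ℂ)
    (hcl : ∀ a : Fin 4 × Fin 4 × Fin 4, ∃ (b : Fin 4 × Fin 4 × Fin 4) (s : ℝ),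
      (s = 1 ∨ s = -1) ∧ C * pauli3 a * Cᴴ = (s : ℂ) • pauli3 b)
    (ψ : Matrix ((Fin 2 × Fin 2) × Fin 2) ((Fin 2 × Fin 2) × Fin 2) ℂ) :
    ∑ a : Fin 4 × Fin 4 × Fin 4, ‖(pauli3 a * (C * ψ * Cᴴ)).trace‖ ^ 4
      = ∑ a : Fin 4 × Fin 4 × Fin 4, ‖(pauli3 a * ψ).trace‖ ^ 4 := by
  have hC1 : Cᴴ * C = 1 := by
    have := (Matrix.mem_unitaryGroup_iff'.mp hCu)
    simpa [Matrix.star_eq_conjTranspose] using this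
  have hC2 : C * Cᴴ = 1 := by
    have := (Matrix.mem_unitaryGroup_iff.mp hCu)
    simpa [Matrix.star_eq_conjTranspose] using this
  choose f s hs hfs using hcl
  have hsq : ∀ a, (s a : ℂ) * (s a : ℂ) = 1 := by
    intro a; rcases hs a with h | h <;> simp [h]
  have habs : ∀ a, |s a| = 1 := by
    intro a; rcases hs a with h | h <;> simp [h]
  have hPf : ∀ a, pauli3 (f a) = (s a : ℂ) • (C * pauli3 a * Cᴴ) := by
    intro a
    rw [hfs a, smul_smul, hsq a, one_smul]
  have hinj : Function.Injective f := by
    intro a a' hfa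
    have e1 : Cᴴ * pauli3 (f a) * C = (s a : ℂ) • pauli3 a := by
      rw [hPf a, Matrix.mul_smul, Matrix.smul_mul]
      congr 1
      calc Cᴴ * (C * pauli3 a * Cᴴ) * C = (Cᴴ * C) * pauli3 a * (Cᴴ * C) := by
            simp only [Matrix.mul_assoc]
        _ = pauli3 a := by rw [hC1]; simp
    have e2 : Cᴴ * pauli3 (f a) * C = (s a' : ℂ) • pauli3 a' := by
      rw [hfa, hPf a', Matrix.mul_smul, Matrix.smul_mul]
      congr 1
      calc Cᴴ * (C * pauli3 a' * Cᴴ) * C = (Cᴴ * C) * pauli3 a' * (Cᴴ * C) := by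
            simp only [Matrix.mul_assoc]
        _ = pauli3 a' := by rw [hC1]; simp
    have : pauli3 a = ((s a * s a' : ℝ) : ℂ) • pauli3 a' := by
      have := e1.symm.trans e2
      have h2 : (s a : ℂ) • ((s a : ℂ) • pauli3 a) = (s a : ℂ) • ((s a' : ℂ) • pauli3 a') := by
        rw [this]
      rw [smul_smul, hsq a, one_smul] at h2
      rw [h2, smul_smul]; push_cast; ring_nf
    exact pauli3_inj (by rcases hs a with h | h <;> rcases hs a' with h' | h' <;>
      simp [h, h']) this
  have hbij : Function.Bijective f := Finite.injective_iff_bijective.mp hinj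
  refine (Fintype.sum_bijective f hbij _ _ ?_).symm
  intro a
  have : (pauli3 (f a) * (C * ψ * Cᴴ)).trace = (s a : ℂ) * (pauli3 a * ψ).trace := by
    rw [hPf a, Matrix.smul_mul, Matrix.trace_smul]
    congr 1
    calc (C * pauli3 a * Cᴴ * (C * ψ * Cᴴ)).trace
        = (C * (pauli3 a * ψ) * Cᴴ).trace := by
          rw [show C * pauli3 a * Cᴴ * (C * ψ * Cᴴ) = C * (pauli3 a * ψ) * Cᴴ by
            calc C * pauli3 a * Cᴴ * (C * ψ * Cᴴ)
                = C * pauli3 a * (Cᴴ * C) * ψ * Cᴴ := by simp only [Matrix.mul_assoc]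
              _ = C * (pauli3 a * ψ) * Cᴴ := by rw [hC1]; simp [Matrix.mul_assoc]]
      _ = (Cᴴ * C * (pauli3 a * ψ)).trace := Matrix.trace_mul_cycle _ _ _
      _ = (pauli3 a * ψ).trace := by rw [hC1, one_mul]
  rw [this]
  rw [show ‖(s a : ℂ) * (pauli3 a * ψ).trace‖
      = ‖(s a : ℂ)‖ * ‖(pauli3 a * ψ).trace‖ from norm_mul _ _,
    Complex.norm_real, Real.norm_eq_abs, habs a, one_mul]

lemma sum3_tens (ρ : Matrix (Fin 2 × Fin 2) (Fin 2 × Fin 2) ℂ)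
    (σ : Matrix (Fin 2) (Fin 2) ℂ) :
    ∑ a : Fin 4 × Fin 4 × Fin 4, ‖(pauli3 a * (ρ ⊗ₖ σ)).trace‖ ^ 4
      = (∑ p : Fin 4 × Fin 4, ‖(pauli2 p * ρ).trace‖ ^ 4) *
        (∑ c : Fin 4, ‖(pauli c * σ).trace‖ ^ 4) := by
  have hterm : ∀ a : Fin 4 × Fin 4 × Fin 4,
      ‖(pauli3 a * (ρ ⊗ₖ σ)).trace‖ ^ 4
        = ‖(pauli2 (a.1, a.2.1) * ρ).trace‖ ^ 4
          * ‖(pauli a.2.2 * σ).trace‖ ^ 4 := by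
    intro a
    have : pauli3 a * (ρ ⊗ₖ σ) = (pauli2 (a.1, a.2.1) * ρ) ⊗ₖ (pauli a.2.2 * σ) :=
      (Matrix.mul_kronecker_mul _ _ _ _).symm
    rw [this, Matrix.trace_kronecker, norm_mul, mul_pow]
  simp only [hterm]
  rw [Fintype.sum_prod_type, Fintype.sum_prod_type, Finset.sum_mul]
  refine Finset.sum_congr rfl fun x _ => ?_
  rw [Fintype.sum_prod_type, Finset.sum_mul]
  refine Finset.sum_congr rfl fun y _ => ?_
  rw [Finset.mul_sum]

lemma kron_conjTranspose {l m n p : Type*} (A : Matrix l m ℂ) (B : Matrix n p ℂ) :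
    (A ⊗ₖ B)ᴴ = Aᴴ ⊗ₖ Bᴴ := by
  ext ⟨i, k⟩ ⟨j, l⟩
  simp [Matrix.conjTranspose_apply, Matrix.kroneckerMap_apply, star_mul', mul_comm]

lemma S2_ge_one (ψ : Matrix (Fin 2 × Fin 2) (Fin 2 × Fin 2) ℂ) (h : ψ.trace = 1) :
    1 ≤ ∑ p : Fin 4 × Fin 4, ‖(pauli2 p * ψ).trace‖ ^ 4 := by
  have h00 : ‖(pauli2 (0, 0) * ψ).trace‖ ^ 4 = 1 := by
    have : pauli2 (0, 0) = 1 := by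
      show (pauli 0) ⊗ₖ (pauli 0) = 1
      rw [pauli_zero, Matrix.one_kronecker_one]
    rw [this, one_mul, h]
    simp
  calc (1 : ℝ) = ‖(pauli2 (0, 0) * ψ).trace‖ ^ 4 := h00.symm
    _ ≤ _ := Finset.single_le_sum (f := fun p => ‖(pauli2 p * ψ).trace‖ ^ 4)
        (fun i _ => by positivity) (Finset.mem_univ _)

lemma S1_ge_one (ψ : Matrix (Fin 2) (Fin 2) ℂ) (h : ψ.trace = 1) :
    1 ≤ ∑ c : Fin 4, ‖(pauli c * ψ).trace‖ ^ 4 := by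
  have h0 : ‖(pauli 0 * ψ).trace‖ ^ 4 = 1 := by
    rw [pauli_zero, one_mul, h]; simp
  calc (1 : ℝ) = ‖(pauli 0 * ψ).trace‖ ^ 4 := h0.symm
    _ ≤ _ := Finset.single_le_sum (f := fun c => ‖(pauli c * ψ).trace‖ ^ 4)
        (fun i _ => by positivity) (Finset.mem_univ _)

lemma S1_e0 : ∑ c : Fin 4, ‖(pauli c * dm e0).trace‖ ^ 4 = 2 := by
  have : ∀ c : Fin 4, (pauli c * dm e0).trace = if c = 0 ∨ c = 3 then 1 else 0 := by
    intro c
    fin_cases c <;>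
      simp [pauli, dm, e0, vecMulVec, Matrix.trace, Matrix.diag, Matrix.mul_apply,
        Fin.sum_univ_two, Matrix.one_apply]
  rw [Fin.sum_univ_four]
  simp [this]
  norm_num

lemma entry_abs_le {ι : Type*} [Fintype ι] (x : ι → ℂ)
    (hx : ∑ i, Complex.normSq (x i) = 1) (i : ι) : ‖x i‖ ≤ 1 := by
  have h1 : Complex.normSq (x i) ≤ 1 :=
    hx ▸ Finset.single_le_sum (fun j _ => Complex.normSq_nonneg (x j)) (Finset.mem_univ i)
  have h2 := Complex.sq_norm (x i)
  nlinarith [norm_nonneg (x i)]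

lemma trace_pauli2_abs_le (p : Fin 4 × Fin 4) (x : Fin 2 × Fin 2 → ℂ)
    (hx : ∑ i, Complex.normSq (x i) = 1) :
    ‖(pauli2 p * dm x).trace‖ ≤ 16 := by
  have hP : ∀ (i j : Fin 2 × Fin 2), ‖pauli2 p i j‖ ≤ 1 := by
    intro i j
    have : pauli2 p i j = pauli p.1 i.1 j.1 * pauli p.2 i.2 j.2 := rfl
    rw [this, norm_mul]
    exact mul_le_one₀ (pauli_entry_abs _ _ _) (norm_nonneg _) (pauli_entry_abs _ _ _)
  have hterm : ∀ (i j : Fin 2 × Fin 2), ‖pauli2 p i j * dm x j i‖ ≤ 1 := by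
    intro i j
    rw [norm_mul]
    have hd : ‖dm x j i‖ ≤ 1 := by
      have : dm x j i = x j * star (x i) := rfl
      rw [this, norm_mul]
      simpa using mul_le_one₀ (entry_abs_le x hx j) (norm_nonneg _)
        (by simpa using entry_abs_le x hx i)
    exact mul_le_one₀ (hP i j) (norm_nonneg _) hd
  have htr : (pauli2 p * dm x).trace = ∑ i : Fin 2 × Fin 2, ∑ j : Fin 2 × Fin 2,
      pauli2 p i j * dm x j i := by
    simp [Matrix.trace, Matrix.diag, Matrix.mul_apply]
  rw [htr]
  calc ‖∑ i : Fin 2 × Fin 2, ∑ j : Fin 2 × Fin 2, pauli2 p i j * dm x j i‖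
      ≤ ∑ i : Fin 2 × Fin 2, ‖∑ j : Fin 2 × Fin 2, pauli2 p i j * dm x j i‖ :=
        norm_sum_le _ _
    _ ≤ ∑ i : Fin 2 × Fin 2, ∑ j : Fin 2 × Fin 2, ‖pauli2 p i j * dm x j i‖ :=
        Finset.sum_le_sum fun i _ => norm_sum_le _ _
    _ ≤ ∑ _i : Fin 2 × Fin 2, ∑ _j : Fin 2 × Fin 2, (1 : ℝ) :=
        Finset.sum_le_sum fun i _ => Finset.sum_le_sum fun j _ => hterm i j
    _ = 16 := by simp; norm_num

lemma M2two_dm_ge (x : Fin 2 × Fin 2 → ℂ) (hx : ∑ i, Complex.normSq (x i) = 1) :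
    -(Real.logb 2 (2 ^ 20)) ≤ M2two (dm x) := by
  have htr : (dm x).trace = 1 := by rw [trace_dm, hx]; norm_num
  set S := ∑ p : Fin 4 × Fin 4, ‖(pauli2 p * dm x).trace‖ ^ 4 with hS
  have hS1 : 1 ≤ S := S2_ge_one _ htr
  have hSle : S ≤ 16 * 16 ^ 4 := by
    calc S ≤ ∑ _p : Fin 4 × Fin 4, (16 : ℝ) ^ 4 := Finset.sum_le_sum fun p _ => by
          exact pow_le_pow_left₀ (norm_nonneg _) (trace_pauli2_abs_le p x hx) 4
      _ = 16 * 16 ^ 4 := by simp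
  have hle : (1 / 4) * S ≤ 2 ^ 20 := by nlinarith
  have hpos : (0 : ℝ) < (1 / 4) * S := by nlinarith
  unfold M2two
  have := Real.logb_le_logb_of_le (b := 2) (by norm_num) hpos hle
  linarith

theorem local_magic_distillation
    (v w : Fin 2 × Fin 2 → ℂ) (u : Fin 2 → ℂ)
    (hv : ∑ i, Complex.normSq (v i) = 1)
    (hw : ∑ i, Complex.normSq (w i) = 1)
    (hu : ∑ i, Complex.normSq (u i) = 1)
    (C : Matrix ((Fin 2 × Fin 2) × Fin 2) ((Fin 2 × Fin 2) × Fin 2) ℂ)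
    (hC : IsClifford3 C)
    (hact : C.mulVec (tens v e0) = tens w u)
    (hmagic : M2one (dm u) > M2L (dm v)) :
    (¬ ∃ (UA UB : Matrix (Fin 2) (Fin 2) ℂ),
        UA ∈ Matrix.unitaryGroup (Fin 2) ℂ ∧ UB ∈ Matrix.unitaryGroup (Fin 2) ℂ ∧
        dm w = (UA ⊗ₖ UB) * dm v * (UA ⊗ₖ UB)ᴴ) ∧
      M2two (dm w) < M2NL (dm v) := by
  obtain ⟨hCu, hcl⟩ := hC
  have hA : dm (tens w u) = C * dm (tens v e0) * Cᴴ := by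
    rw [← hact, dm_mulVec]
  set S2w := ∑ p : Fin 4 × Fin 4, ‖(pauli2 p * dm w).trace‖ ^ 4 with hS2w
  set S2v := ∑ p : Fin 4 × Fin 4, ‖(pauli2 p * dm v).trace‖ ^ 4 with hS2v
  set S1u := ∑ c : Fin 4, ‖(pauli c * dm u).trace‖ ^ 4 with hS1u
  have key : S2w * S1u = S2v * 2 := by
    have h1 : ∑ a : Fin 4 × Fin 4 × Fin 4,
        ‖(pauli3 a * dm (tens w u)).trace‖ ^ 4 = S2w * S1u := by
      rw [dm_tens, sum3_tens]
    have h2 : ∑ a : Fin 4 × Fin 4 × Fin 4,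
        ‖(pauli3 a * dm (tens w u)).trace‖ ^ 4
        = ∑ a : Fin 4 × Fin 4 × Fin 4,
            ‖(pauli3 a * dm (tens v e0)).trace‖ ^ 4 := by
      rw [hA]
      exact clifford_sum C hCu hcl _
    have h3 : ∑ a : Fin 4 × Fin 4 × Fin 4,
        ‖(pauli3 a * dm (tens v e0)).trace‖ ^ 4 = S2v * 2 := by
      rw [dm_tens, sum3_tens, S1_e0]
    rw [← h1, h2, h3]
  have htrw : (dm w).trace = 1 := by rw [trace_dm, hw]; norm_num
  have htrv : (dm v).trace = 1 := by rw [trace_dm, hv]; norm_num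
  have htru : (dm u).trace = 1 := by rw [trace_dm, hu]; norm_num
  have hS2w1 : 1 ≤ S2w := S2_ge_one _ htrw
  have hS2v1 : 1 ≤ S2v := S2_ge_one _ htrv
  have hS1u1 : 1 ≤ S1u := S1_ge_one _ htru
  have hM : M2two (dm w) = M2two (dm v) - M2one (dm u) := by
    unfold M2two M2one
    rw [← hS2w, ← hS2v, ← hS1u]
    have hq : (1 / 4 : ℝ) * S2w * ((1 / 2) * S1u) = (1 / 4) * S2v := by
      linear_combination (1 / 8 : ℝ) * key
    have hlog : Real.logb 2 ((1 / 4 : ℝ) * S2w) + Real.logb 2 ((1 / 2 : ℝ) * S1u)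
        = Real.logb 2 ((1 / 4 : ℝ) * S2v) := by
      rw [← Real.logb_mul (by positivity) (by positivity), hq]
    linarith
  have h2 : M2two (dm w) < M2NL (dm v) := by
    have hL : M2L (dm v) = M2two (dm v) - M2NL (dm v) := rfl
    rw [hL] at hmagic
    linarith
  refine ⟨?_, h2⟩
  rintro ⟨UA, UB, hUA, hUB, heq⟩
  have hbdd : BddBelow (Set.range fun U :
      Matrix.unitaryGroup (Fin 2) ℂ × Matrix.unitaryGroup (Fin 2) ℂ =>
      M2two (((U.1 : Matrix (Fin 2) (Fin 2) ℂ) ⊗ₖ (U.2 : Matrix (Fin 2) (Fin 2) ℂ)) * dm v *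
        ((U.1 : Matrix (Fin 2) (Fin 2) ℂ) ⊗ₖ (U.2 : Matrix (Fin 2) (Fin 2) ℂ))ᴴ)) := by
    refine ⟨-(Real.logb 2 (2 ^ 20)), ?_⟩
    rintro r ⟨U, rfl⟩
    set K := (U.1 : Matrix (Fin 2) (Fin 2) ℂ) ⊗ₖ (U.2 : Matrix (Fin 2) (Fin 2) ℂ) with hKdef
    have hK : Kᴴ * K = 1 := by
      rw [hKdef, kron_conjTranspose, ← Matrix.mul_kronecker_mul]
      have h1 : (U.1 : Matrix (Fin 2) (Fin 2) ℂ)ᴴ * (U.1 : Matrix (Fin 2) (Fin 2) ℂ) = 1 := by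
        simpa [Matrix.star_eq_conjTranspose] using Matrix.UnitaryGroup.star_mul_self U.1
      have h2 : (U.2 : Matrix (Fin 2) (Fin 2) ℂ)ᴴ * (U.2 : Matrix (Fin 2) (Fin 2) ℂ) = 1 := by
        simpa [Matrix.star_eq_conjTranspose] using Matrix.UnitaryGroup.star_mul_self U.2
      rw [h1, h2, Matrix.one_kronecker_one]
    have hrw : K * dm v * Kᴴ = dm (K.mulVec v) := (dm_mulVec K v).symm
    show -(Real.logb 2 (2 ^ 20)) ≤ M2two (K * dm v * Kᴴ)
    rw [hrw]
    apply M2two_dm_ge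
    have htr : (dm (K.mulVec v)).trace = 1 := by
      rw [dm_mulVec, Matrix.trace_mul_cycle, hK, one_mul, trace_dm, hv]
      norm_num
    have := (trace_dm (K.mulVec v)).symm.trans htr
    exact_mod_cast this
  have hle : M2NL (dm v) ≤ M2two (dm w) := by
    rw [heq]
    exact ciInf_le hbdd (⟨UA, hUA⟩, ⟨UB, hUB⟩)
  linarith
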